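/- arXiv:2208.00026 — 5 statements merged into one kernel-verified Lean document; each statement's English description precedes it below -/
import Mathlib

section
/- Let E be a real normed vector space and H : ℝ × ℝ × E → ℝ a differentiable function that is independent of the first coordinate. Define vector fields on ℝ × ℝ × E by T(p) = ((H(p)+1)/2, −1, 0) and JT(p) = ((H(p)−1)/2, −1, 0). Then for every v ∈ E, the constant vector field X ≡ (0, 0, v) satisfies [X, T] = [X, JT] = ((∂_v H)/2)·(T − JT), where ∂_v H(p) denotes the derivative of H at p in the direction (0,0,v) and T − JT is the constant vector field (1, 0, 0). -/
/-- The Lie bracket of two differentiable vector fields `X, Y` on a real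
normed vector space `F`: `[X, Y](p) = (DY)_p(X(p)) − (DX)_p(Y(p))`. -/
noncomputable def lieBracketVF {F : Type*} [NormedAddCommGroup F] [NormedSpace ℝ F]
    (X Y : F → F) : F → F :=
  fun p => fderiv ℝ Y p (X p) - fderiv ℝ X p (Y p)

/-- On `ℝ × ℝ × E` with `T(p) = ((H(p)+1)/2, −1, 0)` and
`JT(p) = ((H(p)−1)/2, −1, 0)` for a differentiable function `H` independent of
the first coordinate, every constant vector field `X ≡ (0, 0, v)` satisfies
`[X, T] = [X, JT] = ((∂_v H)/2) · (T − JT)`, where `T − JT` is the constant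
vector field `(1, 0, 0)`. -/
theorem bracket_with_T_and_JT {E : Type*} [NormedAddCommGroup E] [NormedSpace ℝ E]
    (H : ℝ × ℝ × E → ℝ) (hH : Differentiable ℝ H)
    (hInd : ∀ (a a' b : ℝ) (e : E), H (a, b, e) = H (a', b, e))
    (T JT : ℝ × ℝ × E → ℝ × ℝ × E)
    (hT : T = fun p => ((H p + 1) / 2, -1, 0))
    (hJT : JT = fun p => ((H p - 1) / 2, -1, 0))
    (v : E) (X : ℝ × ℝ × E → ℝ × ℝ × E) (hX : X = fun _ => (0, 0, v)) :
    lieBracketVF X T = (fun p => (fderiv ℝ H p (0, 0, v) / 2) • (T p - JT p)) ∧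
    lieBracketVF X JT = (fun p => (fderiv ℝ H p (0, 0, v) / 2) • (T p - JT p)) ∧
    (∀ p, T p - JT p = ((1 : ℝ), (0 : ℝ), (0 : E))) := by
  subst hT hJT hX
  have hTmJT : ∀ p : ℝ × ℝ × E,
      (((H p + 1) / 2, (-1 : ℝ), (0 : E)) - ((H p - 1) / 2, (-1 : ℝ), (0 : E)))
        = ((1 : ℝ), (0 : ℝ), (0 : E)) := by
    intro p
    simp [Prod.ext_iff]
    ring
  have hXd : ∀ p : ℝ × ℝ × E,
      fderiv ℝ (fun _ : ℝ × ℝ × E => ((0 : ℝ), (0 : ℝ), v)) p = 0 :=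
    fun p => fderiv_const_apply _
  have hTd : ∀ p : ℝ × ℝ × E,
      HasFDerivAt (fun p : ℝ × ℝ × E => ((H p + 1) / 2, (-1 : ℝ), (0 : E)))
        ((((1 : ℝ) / 2) • fderiv ℝ H p).prod 0) p := by
    intro p
    have : (fun p : ℝ × ℝ × E => (H p + 1) / 2) = fun p => (1 / 2 : ℝ) * (H p + 1) := by
      funext q; ring
    exact HasFDerivAt.prodMk ((this ▸ (((hH p).hasFDerivAt.add_const 1).const_mul (1/2 : ℝ))))
      (hasFDerivAt_const _ _)
  have hJTd : ∀ p : ℝ × ℝ × E,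
      HasFDerivAt (fun p : ℝ × ℝ × E => ((H p - 1) / 2, (-1 : ℝ), (0 : E)))
        ((((1 : ℝ) / 2) • fderiv ℝ H p).prod 0) p := by
    intro p
    have : (fun p : ℝ × ℝ × E => (H p - 1) / 2) = fun p => (1 / 2 : ℝ) * (H p - 1) := by
      funext q; ring
    exact HasFDerivAt.prodMk ((this ▸ (((hH p).hasFDerivAt.sub_const 1).const_mul (1/2 : ℝ))))
      (hasFDerivAt_const _ _)
  refine ⟨?_, ?_, hTmJT⟩ <;>
  · funext p
    simp only [lieBracketVF, hXd, (hTd p).fderiv, (hJTd p).fderiv, hTmJT,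
      ContinuousLinearMap.zero_apply, ContinuousLinearMap.prod_apply,
      ContinuousLinearMap.smul_apply, ContinuousLinearMap.zero_apply,
      Prod.smul_mk, smul_zero, smul_eq_mul]
    simp [Prod.ext_iff]
    ring
end

section
/- Let E be a real normed vector space with a continuous linear complex structure J₀ (J₀ ∘ J₀ = −id), and let H : ℝ × ℝ × E → ℝ be a differentiable function independent of the first coordinate. Define vector fields on ℝ × ℝ × E by T(p) = ((H(p)+1)/2, −1, 0) and JT(p) = ((H(p)−1)/2, −1, 0), and define the pointwise linear map J_p(a, b, w) = (J_{H(p)}(a,b), J₀ w), where J_s is the endomorphism of ℝ² with J_s(1,0) = (s, −2), J_s(0,1) = ((s²+1)/2, −s). Then for every v ∈ E, with X the constant vector field (0,0,v) and JX the constant vector field (0,0,J₀v), the Nijenhuis combination satisfies [JX, JT] − [X, T] − J([X, JT]) − J([JX, T]) = −(∂_v H)·T − (∂_{J₀v} H)·JT, where J is applied pointwise to vector fields and ∂_w H(p) denotes the derivative of H at p in the direction (0,0,w). -/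
/-- On `ℝ × ℝ × E`, with the almost-complex structure
`J_p(a, b, w) = (J_{H(p)}(a,b), J₀ w)` where `J_s(1,0) = (s, −2)` and
`J_s(0,1) = ((s²+1)/2, −s)`, the vector fields `T(p) = ((H(p)+1)/2, −1, 0)`,
`JT(p) = ((H(p)−1)/2, −1, 0)` and the constant vector fields `X ≡ (0,0,v)`,
`JX ≡ (0,0,J₀v)` satisfy the Nijenhuis identity
`[JX, JT] − [X, T] − J([X, JT]) − J([JX, T]) = −(∂_v H)·T − (∂_{J₀v} H)·JT`. -/
theorem nijenhuis_combination {E : Type*} [NormedAddCommGroup E] [NormedSpace ℝ E]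
    (J₀ : E →L[ℝ] E) (hJ₀ : ∀ w : E, J₀ (J₀ w) = -w)
    (H : ℝ × ℝ × E → ℝ) (hH : Differentiable ℝ H)
    (hInd : ∀ (a a' b : ℝ) (e : E), H (a, b, e) = H (a', b, e))
    (T JT : ℝ × ℝ × E → ℝ × ℝ × E)
    (hT : T = fun p => ((H p + 1) / 2, -1, 0))
    (hJT : JT = fun p => ((H p - 1) / 2, -1, 0))
    (J : (ℝ × ℝ × E) → (ℝ × ℝ × E) → (ℝ × ℝ × E))
    (hJ : ∀ (p : ℝ × ℝ × E) (a b : ℝ) (w : E),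
      J p (a, b, w) =
        (H p * a + ((H p ^ 2 + 1) / 2) * b, -2 * a - H p * b, J₀ w))
    (v : E) (X JX : ℝ × ℝ × E → ℝ × ℝ × E)
    (hX : X = fun _ => (0, 0, v)) (hJX : JX = fun _ => (0, 0, J₀ v)) :
    (fun p => lieBracketVF JX JT p - lieBracketVF X T p
        - J p (lieBracketVF X JT p) - J p (lieBracketVF JX T p)) =
      fun p => -(fderiv ℝ H p (0, 0, v)) • T p
        - (fderiv ℝ H p (0, 0, J₀ v)) • JT p := by
  funext p
  -- derivatives of T and JT
  have hTd : ∀ (c : ℝ) (p : ℝ × ℝ × E),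
      HasFDerivAt (fun q : ℝ × ℝ × E => ((H q + c) / 2, (-1 : ℝ), (0 : E)))
        (((2⁻¹ : ℝ) • fderiv ℝ H p).prod 0) p := by
    intro c p
    refine HasFDerivAt.prodMk ?_ (hasFDerivAt_const _ _)
    simpa [div_eq_inv_mul, smul_eq_mul, Pi.smul_def] using
      (((hH p).hasFDerivAt.add_const c).const_smul (2⁻¹ : ℝ))
  have hfT : fderiv ℝ T p = ((2⁻¹ : ℝ) • fderiv ℝ H p).prod 0 := by
    rw [hT]; exact (hTd 1 p).fderiv
  have hfJT : fderiv ℝ JT p = ((2⁻¹ : ℝ) • fderiv ℝ H p).prod 0 := by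
    rw [hJT]
    have := hTd (-1) p
    simp only [sub_eq_add_neg]
    exact this.fderiv
  have hfX : fderiv ℝ X p = 0 := by
    rw [hX]; exact fderiv_const_apply ((0:ℝ),(0:ℝ),v)
  have hfJX : fderiv ℝ JX p = 0 := by
    rw [hJX]; exact fderiv_const_apply ((0:ℝ),(0:ℝ),J₀ v)
  set α := fderiv ℝ H p (0, 0, v) with hα
  set β := fderiv ℝ H p (0, 0, J₀ v) with hβ
  have e1 : lieBracketVF X T p = (α / 2, 0, 0) := by
    simp [lieBracketVF, hfT, hfX, hX, div_eq_inv_mul, ← hα, Prod.mk_zero_zero]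
  have e2 : lieBracketVF JX JT p = (β / 2, 0, 0) := by
    simp [lieBracketVF, hfJT, hfJX, hJX, div_eq_inv_mul, ← hβ, Prod.mk_zero_zero]
  have e3 : lieBracketVF X JT p = (α / 2, 0, 0) := by
    simp [lieBracketVF, hfJT, hfX, hX, div_eq_inv_mul, ← hα, Prod.mk_zero_zero]
  have e4 : lieBracketVF JX T p = (β / 2, 0, 0) := by
    simp [lieBracketVF, hfT, hfJX, hJX, div_eq_inv_mul, ← hβ, Prod.mk_zero_zero]
  rw [e1, e2, e3, e4, hJ, hJ, hT, hJT]
  simp only [Prod.mk_sub_mk, Prod.smul_mk, Prod.neg_mk, Prod.mk.injEq, smul_eq_mul]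
  refine ⟨by ring, by ring, by simp⟩
end

section
/- Let 0 < h₀ < h_l and c₁, c₂ ∈ ℝ, and set y(h) = c₁ h⁴ + c₂ h⁻⁴ + 1. If y(h₀) = y(h_l) = 0, y′(h₀) = 2/h₀ and y′(h_l) = −2/h_l, then c₁ = −1/(h₀⁴ + h_l⁴) = −1/(4h₀⁴), c₂ = −h₀⁴ h_l⁴/(h₀⁴ + h_l⁴) = −3h₀⁴/4, and h₀⁴ + h_l⁴ = −2(h₀⁴ − h_l⁴); equivalently h_l⁴ = 3 h₀⁴, i.e., h_l = 3^{1/4} h₀. -/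
lemma deriv_y_formula (c₁ c₂ : ℝ) (x : ℝ) (hx : x ≠ 0) :
    deriv (fun h : ℝ => c₁ * h ^ 4 + c₂ / h ^ 4 + 1) x
      = 4 * c₁ * x ^ 3 - 4 * c₂ / x ^ 5 := by
  have hx4 : x ^ 4 ≠ 0 := pow_ne_zero _ hx
  have h1 : HasDerivAt (fun h : ℝ => c₁ * h ^ 4) (c₁ * (4 * x ^ 3)) x := by
    simpa using (hasDerivAt_pow 4 x).const_mul c₁
  have hpow : HasDerivAt (fun h : ℝ => h ^ 4) (4 * x ^ 3) x := by
    simpa using hasDerivAt_pow 4 x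
  have h2 : HasDerivAt (fun h : ℝ => c₂ / h ^ 4)
      ((0 * x ^ 4 - c₂ * (4 * x ^ 3)) / (x ^ 4) ^ 2) x :=
    (hasDerivAt_const x c₂).div hpow hx4
  have h3 : HasDerivAt (fun h : ℝ => c₁ * h ^ 4 + c₂ / h ^ 4 + 1) _ x := (h1.add h2).add_const 1
  rw [h3.deriv]
  field_simp
  ring

/-- The boundary conditions `y(h₀) = y(h_l) = 0`, `y′(h₀) = 2/h₀`,
`y′(h_l) = −2/h_l` for `y(h) = c₁ h⁴ + c₂ h⁻⁴ + 1` determine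
`c₁ = −1/(h₀⁴ + h_l⁴) = −1/(4h₀⁴)`, `c₂ = −h₀⁴h_l⁴/(h₀⁴ + h_l⁴) = −3h₀⁴/4`,
and `h₀⁴ + h_l⁴ = −2(h₀⁴ − h_l⁴)`, i.e. `h_l⁴ = 3h₀⁴`, i.e. `h_l = 3^{1/4} h₀`. -/
theorem boundary_conditions_determine_constants (h₀ hl c₁ c₂ : ℝ)
    (hh₀ : 0 < h₀) (hh₀l : h₀ < hl)
    (y : ℝ → ℝ) (hy : y = fun h => c₁ * h ^ 4 + c₂ / h ^ 4 + 1)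
    (hy₀ : y h₀ = 0) (hyl : y hl = 0)
    (hy₀' : deriv y h₀ = 2 / h₀) (hyl' : deriv y hl = -2 / hl) :
    c₁ = -1 / (h₀ ^ 4 + hl ^ 4) ∧ c₁ = -1 / (4 * h₀ ^ 4) ∧
    c₂ = -(h₀ ^ 4 * hl ^ 4) / (h₀ ^ 4 + hl ^ 4) ∧ c₂ = -3 * h₀ ^ 4 / 4 ∧
    h₀ ^ 4 + hl ^ 4 = -2 * (h₀ ^ 4 - hl ^ 4) ∧
    hl ^ 4 = 3 * h₀ ^ 4 ∧
    hl = 3 ^ ((1 : ℝ) / 4) * h₀ := by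
  have hhl : 0 < hl := hh₀.trans hh₀l
  have h₀ne : h₀ ≠ 0 := hh₀.ne'
  have hlne : hl ≠ 0 := hhl.ne'
  subst hy
  rw [deriv_y_formula c₁ c₂ h₀ h₀ne] at hy₀'
  rw [deriv_y_formula c₁ c₂ hl hlne] at hyl'
  simp only at hy₀ hyl
  -- clear denominators
  have e1 : c₁ * h₀ ^ 8 + c₂ + h₀ ^ 4 = 0 := by field_simp at hy₀; linarith
  have e2 : c₁ * hl ^ 8 + c₂ + hl ^ 4 = 0 := by field_simp at hyl; linarith
  have e3 : 4 * c₁ * h₀ ^ 8 - 4 * c₂ = 2 * h₀ ^ 4 := by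
    field_simp at hy₀'; nlinarith [pow_pos hh₀ 4, pow_pos hh₀ 8]
  have e4 : 4 * c₁ * hl ^ 8 - 4 * c₂ = -2 * hl ^ 4 := by
    field_simp at hyl'; nlinarith [pow_pos hhl 4, pow_pos hhl 8]
  have hc₂ : c₂ = -3 * h₀ ^ 4 / 4 := by nlinarith
  have hc₂' : c₂ = -(hl ^ 4) / 4 := by nlinarith
  have hb : hl ^ 4 = 3 * h₀ ^ 4 := by linarith
  have ha8 : (0:ℝ) < h₀ ^ 8 := pow_pos hh₀ 8
  have h4ne : (4 * h₀ ^ 4) ≠ 0 := by positivity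
  have hc₁ : c₁ = -1 / (4 * h₀ ^ 4) := by
    rw [eq_div_iff h4ne]
    refine mul_right_cancel₀ (pow_ne_zero 4 h₀ne) ?_
    nlinarith
  have hsum : h₀ ^ 4 + hl ^ 4 = 4 * h₀ ^ 4 := by linarith
  refine ⟨by rw [hsum]; exact hc₁, hc₁, ?_, hc₂, by linarith, hb, ?_⟩
  · rw [hsum, hb]
    rw [hc₂]; field_simp
  · have h34 : (3 ^ ((1:ℝ)/4) * h₀) ^ 4 = 3 * h₀ ^ 4 := by
      rw [mul_pow, ← Real.rpow_natCast (3 ^ ((1:ℝ)/4)) 4, ← Real.rpow_mul (by norm_num)]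
      norm_num
    have hpos : (0:ℝ) < 3 ^ ((1:ℝ)/4) * h₀ :=
      mul_pos (Real.rpow_pos_of_pos (by norm_num) _) hh₀
    rcases lt_trichotomy hl (3 ^ ((1:ℝ)/4) * h₀) with h | h | h
    · have := pow_lt_pow_left₀ h hhl.le (n := 4) (by norm_num)
      linarith [h34, hb]
    · exact h
    · have := pow_lt_pow_left₀ h hpos.le (n := 4) (by norm_num)
      linarith [h34, hb]
end

section
/- Let h₀ > 0, set h_l = 3^{1/4} h₀, and define y(h) = 1 − h⁴/(4h₀⁴) − 3h₀⁴/(4h⁴). Then there exist l > 0 and a continuous, strictly increasing function h : [0, l] → [h₀, h_l] with h(0) = h₀ and h(l) = h_l, such that h is differentiable on [0, l] and h′(t) = √(y(h(t))) for every t ∈ [0, l] (in particular h′(0) = h′(l) = 0). -/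
open Set Function MeasureTheory intervalIntegral Filter Topology

lemma quart_lb {m x z : ℝ} (hm : 0 ≤ m) (h1 : m ≤ x) (h2 : x ≤ z) :
    4 * m ^ 3 * (z - x) ≤ z ^ 4 - x ^ 4 := by
  have hx : 0 ≤ x := hm.trans h1
  have hmz : m ≤ z := h1.trans h2
  have hz : 0 ≤ z := hx.trans h2
  have key : 4 * m ^ 3 ≤ z^3 + z^2*x + z*x^2 + x^3 := by
    nlinarith [pow_le_pow_left₀ hm hmz 3, pow_le_pow_left₀ hm h1 3,
      mul_le_mul (pow_le_pow_left₀ hm hmz 2) h1 hm (pow_nonneg hz 2),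
      mul_le_mul hmz (pow_le_pow_left₀ hm h1 2) (pow_nonneg hm 2) hz]
  nlinarith [mul_le_mul_of_nonneg_left key (sub_nonneg.2 h2)]

lemma quart_ub {c x z : ℝ} (hx : 0 ≤ x) (h2 : x ≤ z) (h3 : z ≤ c) :
    z ^ 4 - x ^ 4 ≤ 4 * c ^ 3 * (z - x) := by
  have hz : 0 ≤ z := hx.trans h2
  have hc : 0 ≤ c := hz.trans h3
  have hxc : x ≤ c := h2.trans h3
  have key : z^3 + z^2*x + z*x^2 + x^3 ≤ 4 * c ^ 3 := by
    nlinarith [pow_le_pow_left₀ hz h3 3, pow_le_pow_left₀ hx hxc 3,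
      mul_le_mul (pow_le_pow_left₀ hz h3 2) hxc hx (pow_nonneg hc 2),
      mul_le_mul h3 (pow_le_pow_left₀ hx hxc 2) (pow_nonneg hx 2) hc]
  nlinarith [mul_le_mul_of_nonneg_left key (sub_nonneg.2 h2)]

lemma y_formula {a s : ℝ} (ha : 0 < a) (hs : 0 < s) {b : ℝ} (hb4 : b ^ 4 = 3 * a ^ 4) :
    1 - s ^ 4 / (4 * a ^ 4) - 3 * a ^ 4 / (4 * s ^ 4)
      = (s ^ 4 - a ^ 4) * (b ^ 4 - s ^ 4) / (4 * s ^ 4 * a ^ 4) := by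
  rw [hb4]
  field_simp
  ring

lemma y_lb {a b s : ℝ} (ha : 0 < a) (hb4 : b ^ 4 = 3 * a ^ 4) (h1 : a ≤ s) (h2 : s ≤ b) :
    4 / (3 * a ^ 2) * ((s - a) * (b - s)) ≤ 1 - s ^ 4 / (4 * a ^ 4) - 3 * a ^ 4 / (4 * s ^ 4) := by
  have hs : 0 < s := lt_of_lt_of_le ha h1
  rw [y_formula ha hs hb4, le_div_iff₀ (by positivity), div_mul_eq_mul_div, div_mul_eq_mul_div, div_le_iff₀ (by positivity)]
  have k1 : 4 * a ^ 3 * (s - a) ≤ s ^ 4 - a ^ 4 := quart_lb ha.le le_rfl h1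
  have k2 : 4 * a ^ 3 * (b - s) ≤ b ^ 4 - s ^ 4 := quart_lb ha.le h1 h2
  have k3 : s ^ 4 ≤ 3 * a ^ 4 := by
    calc s ^ 4 ≤ b ^ 4 := pow_le_pow_left₀ hs.le h2 4
    _ = 3 * a ^ 4 := hb4
  have hP : 0 ≤ (s - a) * (b - s) := mul_nonneg (sub_nonneg.2 h1) (sub_nonneg.2 h2)
  have k12 : (4 * a ^ 3 * (s - a)) * (4 * a ^ 3 * (b - s)) ≤ (s ^ 4 - a ^ 4) * (b ^ 4 - s ^ 4) :=
    mul_le_mul k1 k2 (by nlinarith [mul_nonneg (pow_nonneg ha.le 3) (sub_nonneg.2 h2)]) (by nlinarith [mul_nonneg (pow_nonneg ha.le 3) (sub_nonneg.2 h1)])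
  nlinarith [mul_le_mul_of_nonneg_left k3 (mul_nonneg hP (by positivity : (0:ℝ) ≤ 16 * a ^ 4)),
    mul_le_mul_of_nonneg_right k12 (by positivity : (0:ℝ) ≤ 3 * a ^ 2)]

lemma y_ub1 {a b s : ℝ} (ha : 0 < a) (hb4 : b ^ 4 = 3 * a ^ 4) (h1 : a ≤ s) (h2 : s ≤ b) :
    1 - s ^ 4 / (4 * a ^ 4) - 3 * a ^ 4 / (4 * s ^ 4) ≤ 2 * b ^ 3 / a ^ 4 * (s - a) := by
  have hs : 0 < s := lt_of_lt_of_le ha h1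
  have hb : 0 < b := hs.trans_le h2
  rw [y_formula ha hs hb4, div_le_iff₀ (by positivity)]
  have he : 2 * b ^ 3 / a ^ 4 * (s - a) * (4 * s ^ 4 * a ^ 4) = 4 * b ^ 3 * (s - a) * (2 * s ^ 4) := by
    field_simp
  rw [he]
  have k1 : s ^ 4 - a ^ 4 ≤ 4 * b ^ 3 * (s - a) := quart_ub ha.le h1 h2
  have k2 : b ^ 4 - s ^ 4 ≤ 2 * s ^ 4 := by nlinarith [pow_le_pow_left₀ ha.le h1 4]
  have hv : 0 ≤ b ^ 4 - s ^ 4 := by nlinarith [pow_le_pow_left₀ hs.le h2 4]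
  have hU : 0 ≤ 4 * b ^ 3 * (s - a) := by
    have := sub_nonneg.2 h1; positivity
  exact mul_le_mul k1 k2 hv hU

lemma y_ub2 {a b s : ℝ} (ha : 0 < a) (hb4 : b ^ 4 = 3 * a ^ 4) (h1 : a ≤ s) (h2 : s ≤ b) :
    1 - s ^ 4 / (4 * a ^ 4) - 3 * a ^ 4 / (4 * s ^ 4) ≤ 2 * b ^ 3 / a ^ 4 * (b - s) := by
  have hs : 0 < s := lt_of_lt_of_le ha h1
  have hb : 0 < b := hs.trans_le h2
  rw [y_formula ha hs hb4, div_le_iff₀ (by positivity)]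
  have he : 2 * b ^ 3 / a ^ 4 * (b - s) * (4 * s ^ 4 * a ^ 4) = (2 * s ^ 4) * (4 * b ^ 3 * (b - s)) := by
    field_simp
  rw [he]
  have k1 : s ^ 4 - a ^ 4 ≤ 2 * s ^ 4 := by nlinarith [pow_le_pow_left₀ ha.le h1 4, pow_le_pow_left₀ hs.le h2 4]
  have k2 : b ^ 4 - s ^ 4 ≤ 4 * b ^ 3 * (b - s) := quart_ub hs.le h2 le_rfl
  have hv : 0 ≤ b ^ 4 - s ^ 4 := by nlinarith [pow_le_pow_left₀ hs.le h2 4]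
  have hu : 0 ≤ s ^ 4 - a ^ 4 := by nlinarith [pow_le_pow_left₀ ha.le h1 4]
  calc (s ^ 4 - a ^ 4) * (b ^ 4 - s ^ 4) ≤ (2 * s ^ 4) * (4 * b ^ 3 * (b - s)) :=
    mul_le_mul k1 k2 (by linarith) (by positivity)


section
set_option maxHeartbeats 2000000 in
/-- For `h₀ > 0`, `h_l = 3^{1/4} h₀` and
`y(h) = 1 − h⁴/(4h₀⁴) − 3h₀⁴/(4h⁴)`, there exist `l > 0` and a continuous,
strictly increasing profile function `h : [0, l] → [h₀, h_l]` with
`h(0) = h₀`, `h(l) = h_l`, differentiable on `[0, l]` with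
`h′(t) = √(y(h(t)))` for every `t ∈ [0, l]`. -/
theorem profile_function_exists (h₀ hl : ℝ) (hh₀ : 0 < h₀)
    (hhl : hl = 3 ^ ((1 : ℝ) / 4) * h₀)
    (y : ℝ → ℝ)
    (hy : y = fun h => 1 - h ^ 4 / (4 * h₀ ^ 4) - 3 * h₀ ^ 4 / (4 * h ^ 4)) :
    ∃ l : ℝ, 0 < l ∧ ∃ h : ℝ → ℝ,
      ContinuousOn h (Set.Icc 0 l) ∧
      StrictMonoOn h (Set.Icc 0 l) ∧
      Set.MapsTo h (Set.Icc 0 l) (Set.Icc h₀ hl) ∧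
      h 0 = h₀ ∧ h l = hl ∧
      ∀ t ∈ Set.Icc 0 l,
        HasDerivWithinAt h (Real.sqrt (y (h t))) (Set.Icc 0 l) t := by
  subst hhl hy
  set b : ℝ := 3 ^ ((1 : ℝ) / 4) * h₀ with hbdef
  set y : ℝ → ℝ := fun h => 1 - h ^ 4 / (4 * h₀ ^ 4) - 3 * h₀ ^ 4 / (4 * h ^ 4) with hydef
  -- basic facts about b
  have h3 : (1:ℝ) < 3 ^ ((1 : ℝ) / 4) := by
    rw [show (1:ℝ) = 3 ^ (0:ℝ) by simp]
    exact Real.rpow_lt_rpow_left_iff (by norm_num) |>.mpr (by norm_num)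
  have hab : h₀ < b := by
    rw [hbdef]
    nlinarith
  have hb : 0 < b := hh₀.trans hab
  have hb4 : b ^ 4 = 3 * h₀ ^ 4 := by
    rw [hbdef, mul_pow, ← Real.rpow_natCast ((3:ℝ) ^ ((1:ℝ)/4)) 4, ← Real.rpow_mul (by norm_num)]
    norm_num
  clear_value b
  clear hbdef
  -- y values and bounds
  have hy_a : y h₀ = 0 := by
    rw [hydef]
    have h4 : (4:ℝ) * h₀ ^ 4 ≠ 0 := by positivity
    field_simp
    ring
  have hy_b : y b = 0 := by
    rw [hydef]
    simp only
    rw [hb4]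
    have h4 : (4:ℝ) * h₀ ^ 4 ≠ 0 := by positivity
    field_simp
    ring
  set C : ℝ := 2 * b ^ 3 / h₀ ^ 4 with hCdef
  have hC : 0 < C := by positivity
  set clow : ℝ := 4 / (3 * h₀ ^ 2) with hclowdef
  have hclow : 0 < clow := by positivity
  have hylb : ∀ s, h₀ ≤ s → s ≤ b → clow * ((s - h₀) * (b - s)) ≤ y s :=
    fun s hs1 hs2 => y_lb hh₀ hb4 hs1 hs2
  have hypos : ∀ s, h₀ < s → s < b → 0 < y s := by
    intro s hs1 hs2
    have h1 : 0 < clow * ((s - h₀) * (b - s)) := by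
      have := sub_pos.2 hs1; have := sub_pos.2 hs2; positivity
    exact h1.trans_le (hylb s hs1.le hs2.le)
  have hyub1 : ∀ s, h₀ ≤ s → s ≤ b → y s ≤ C * (s - h₀) := fun s hs1 hs2 => y_ub1 hh₀ hb4 hs1 hs2
  have hyub2 : ∀ s, h₀ ≤ s → s ≤ b → y s ≤ C * (b - s) := fun s hs1 hs2 => y_ub2 hh₀ hb4 hs1 hs2
  -- the integrand g
  set g : ℝ → ℝ := fun s => (Real.sqrt (y s))⁻¹ with hgdef
  have hg_nonneg : ∀ s, 0 ≤ g s := fun s => inv_nonneg.2 (Real.sqrt_nonneg _)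
  have hg_pos : ∀ s, h₀ < s → s < b → 0 < g s :=
    fun s hs1 hs2 => inv_pos.2 (Real.sqrt_pos.2 (hypos s hs1 hs2))
  have hy_meas : Measurable y := by
    rw [hydef]
    apply Measurable.sub
    apply Measurable.sub measurable_const
    · exact (measurable_id.pow_const 4).div_const _
    · exact Measurable.div measurable_const ((measurable_id.pow_const 4).const_mul 4)
  have hg_meas : Measurable g := (Real.continuous_sqrt.measurable.comp hy_meas).inv
  have hy_contAt : ∀ x : ℝ, x ≠ 0 → ContinuousAt y x := by
    intro x hx
    rw [hydef]
    apply ContinuousAt.sub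
    apply ContinuousAt.sub continuousAt_const
    · exact (continuousAt_pow x 4).div_const _
    · exact ContinuousAt.div continuousAt_const (by fun_prop)
        (mul_ne_zero (by norm_num) (pow_ne_zero 4 hx))
  have hg_contAt : ∀ x, h₀ < x → x < b → ContinuousAt g x := by
    intro x hx1 hx2
    exact ((Real.continuous_sqrt.continuousAt.comp (hy_contAt x (hh₀.trans hx1).ne')).inv₀
      (Real.sqrt_pos.2 (hypos x hx1 hx2)).ne')
  -- inverse-sqrt comparison helper
  have hinv_le : ∀ u z : ℝ, 0 < u → u ≤ z → (Real.sqrt z)⁻¹ ≤ (Real.sqrt u)⁻¹ := by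
    intro u z hu huz
    exact inv_anti₀ (Real.sqrt_pos.2 hu) (Real.sqrt_le_sqrt huz)
  -- rpow expressions
  have hrpow_eq : ∀ d : ℝ, 0 ≤ d → d ^ (-(1/2) : ℝ) = (Real.sqrt d)⁻¹ := by
    intro d hd
    rw [Real.rpow_neg hd, Real.sqrt_eq_rpow]
  have hrpow_nonneg : ∀ d : ℝ, 0 ≤ d → 0 ≤ d ^ (-(1/2) : ℝ) := by
    intro d hd; positivity
  -- integrability of the comparison kernels
  have IK1 : ∀ x : ℝ, IntervalIntegrable (fun s => (s - h₀) ^ (-(1/2) : ℝ)) volume h₀ x := by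
    intro x
    have := (intervalIntegrable_rpow' (r := (-(1/2) : ℝ)) (by norm_num)
      (a := 0) (b := x - h₀)).comp_sub_right h₀
    simpa using this
  have IK2 : ∀ x : ℝ, IntervalIntegrable (fun s => (b - s) ^ (-(1/2) : ℝ)) volume x b := by
    intro x
    have := ((intervalIntegrable_rpow' (r := (-(1/2) : ℝ)) (by norm_num)
      (a := 0) (b := b - x)).comp_sub_left b).symm
    simpa using this
  -- key sqrt lower bounds on g (pointwise comparison with the kernels)
  have hg_lb1 : ∀ x, x < b → ∀ s ∈ Icc h₀ x, (Real.sqrt C)⁻¹ * (s - h₀) ^ (-(1/2) : ℝ) ≤ g s := by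
    intro x hx s hs
    rcases eq_or_lt_of_le hs.1 with h | h
    · rw [← h, sub_self, Real.zero_rpow (by norm_num), mul_zero]
      exact hg_nonneg _
    · have hsb : s < b := lt_of_le_of_lt hs.2 hx
      have hys : 0 < y s := hypos s h hsb
      have h1 : (Real.sqrt (C * (s - h₀)))⁻¹ ≤ g s := hinv_le _ _ hys (hyub1 s hs.1 hsb.le)
      calc (Real.sqrt C)⁻¹ * (s - h₀) ^ (-(1/2) : ℝ)
          = (Real.sqrt (C * (s - h₀)))⁻¹ := by
            rw [hrpow_eq _ (sub_pos.2 h).le, Real.sqrt_mul hC.le, mul_inv]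
        _ ≤ g s := h1
  have hg_lb2 : ∀ x, h₀ < x → ∀ s ∈ Icc x b, (Real.sqrt C)⁻¹ * (b - s) ^ (-(1/2) : ℝ) ≤ g s := by
    intro x hx s hs
    rcases eq_or_lt_of_le hs.2 with h | h
    · rw [h, sub_self, Real.zero_rpow (by norm_num), mul_zero]
      exact hg_nonneg _
    · have hsa : h₀ < s := lt_of_lt_of_le hx hs.1
      have hys : 0 < y s := hypos s hsa h
      have h1 : (Real.sqrt (C * (b - s)))⁻¹ ≤ g s := hinv_le _ _ hys (hyub2 s hsa.le h.le)
      calc (Real.sqrt C)⁻¹ * (b - s) ^ (-(1/2) : ℝ)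
          = (Real.sqrt (C * (b - s)))⁻¹ := by
            rw [hrpow_eq _ (sub_pos.2 h).le, Real.sqrt_mul hC.le, mul_inv]
        _ ≤ g s := h1
  -- integrability of g on [h₀, b]
  set d : ℝ := (b - h₀) / 2 with hddef
  have hd : 0 < d := by rw [hddef]; linarith
  set m : ℝ := (h₀ + b) / 2 with hmdef
  set K3 : ℝ := (Real.sqrt clow)⁻¹ * (Real.sqrt d)⁻¹ with hK3def
  have hK3 : 0 ≤ K3 := by positivity
  set B : ℝ → ℝ := fun s => K3 * ((s - h₀) ^ (-(1/2) : ℝ) + (b - s) ^ (-(1/2) : ℝ)) with hBdef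
  have key : ∀ s, h₀ < s → s < b →
      g s ≤ (Real.sqrt clow)⁻¹ * ((Real.sqrt (s - h₀))⁻¹ * (Real.sqrt (b - s))⁻¹) := by
    intro s hs1 hs2
    have h1 : (Real.sqrt (clow * ((s - h₀) * (b - s))))⁻¹ ≤ g s →
        True := fun _ => trivial
    have h2 := hinv_le _ _ (by have u1 := sub_pos.2 hs1; have u2 := sub_pos.2 hs2; positivity :
        0 < clow * ((s - h₀) * (b - s))) (hylb s hs1.le hs2.le)
    rw [Real.sqrt_mul hclow.le, Real.sqrt_mul (by linarith : (0:ℝ) ≤ s - h₀), mul_inv, mul_inv] at h2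
    exact h2
  have hgB : ∀ s ∈ Ioc h₀ b, g s ≤ B s := by
    intro s hs
    have hs1 : h₀ < s := hs.1
    rcases eq_or_lt_of_le hs.2 with hsb | hsb
    · have hgs : g s = 0 := by
        simp only [hgdef]; rw [hsb, hy_b, Real.sqrt_zero, inv_zero]
      rw [hgs, hBdef]
      have := hrpow_nonneg (s - h₀) (by linarith)
      have := hrpow_nonneg (b - s) (by linarith [hs.2])
      positivity
    · have e1 : (s - h₀) ^ (-(1/2):ℝ) = (Real.sqrt (s - h₀))⁻¹ := hrpow_eq _ (by linarith)
      have e2 : (b - s) ^ (-(1/2):ℝ) = (Real.sqrt (b - s))⁻¹ := hrpow_eq _ (by linarith)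
      have hBs : B s = K3 * ((Real.sqrt (s - h₀))⁻¹ + (Real.sqrt (b - s))⁻¹) := by
        rw [hBdef]; simp only; rw [e1, e2]
    -- case split on s vs midpoint
      rcases le_total s m with hsm | hsm
      · have hds : Real.sqrt d ≤ Real.sqrt (b - s) :=
          Real.sqrt_le_sqrt (by rw [hddef]; rw [hmdef] at hsm; linarith)
        have h6 : (Real.sqrt (b - s))⁻¹ ≤ (Real.sqrt d)⁻¹ :=
          inv_anti₀ (Real.sqrt_pos.2 hd) hds
        have h7 := mul_le_mul_of_nonneg_left h6
          (by positivity : (0:ℝ) ≤ (Real.sqrt clow)⁻¹ * (Real.sqrt (s - h₀))⁻¹)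
        have h8 : g s ≤ K3 * (Real.sqrt (s - h₀))⁻¹ := by
          calc g s ≤ (Real.sqrt clow)⁻¹ * ((Real.sqrt (s - h₀))⁻¹ * (Real.sqrt (b - s))⁻¹) :=
                key s hs1 hsb
            _ = (Real.sqrt clow)⁻¹ * (Real.sqrt (s - h₀))⁻¹ * (Real.sqrt (b - s))⁻¹ := by ring
            _ ≤ (Real.sqrt clow)⁻¹ * (Real.sqrt (s - h₀))⁻¹ * (Real.sqrt d)⁻¹ := h7
            _ = K3 * (Real.sqrt (s - h₀))⁻¹ := by rw [hK3def]; ring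
        rw [hBs, mul_add]
        have h9 : 0 ≤ K3 * (Real.sqrt (b - s))⁻¹ := by positivity
        linarith
      · have hds : Real.sqrt d ≤ Real.sqrt (s - h₀) :=
          Real.sqrt_le_sqrt (by rw [hddef]; rw [hmdef] at hsm; linarith)
        have h6 : (Real.sqrt (s - h₀))⁻¹ ≤ (Real.sqrt d)⁻¹ :=
          inv_anti₀ (Real.sqrt_pos.2 hd) hds
        have h7 := mul_le_mul_of_nonneg_left h6
          (by positivity : (0:ℝ) ≤ (Real.sqrt clow)⁻¹ * (Real.sqrt (b - s))⁻¹)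
        have h8 : g s ≤ K3 * (Real.sqrt (b - s))⁻¹ := by
          calc g s ≤ (Real.sqrt clow)⁻¹ * ((Real.sqrt (s - h₀))⁻¹ * (Real.sqrt (b - s))⁻¹) :=
                key s hs1 hsb
            _ = (Real.sqrt clow)⁻¹ * (Real.sqrt (b - s))⁻¹ * (Real.sqrt (s - h₀))⁻¹ := by ring
            _ ≤ (Real.sqrt clow)⁻¹ * (Real.sqrt (b - s))⁻¹ * (Real.sqrt d)⁻¹ := h7
            _ = K3 * (Real.sqrt (b - s))⁻¹ := by rw [hK3def]; ring
        rw [hBs, mul_add]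
        have h9 : 0 ≤ K3 * (Real.sqrt (s - h₀))⁻¹ := by positivity
        linarith
  have hB_int : IntervalIntegrable B volume h₀ b := ((IK1 b).add (IK2 h₀)).const_mul K3
  have hgint : IntervalIntegrable g volume h₀ b := by
    rw [intervalIntegrable_iff_integrableOn_Ioc_of_le hab.le]
    have hBint : IntegrableOn B (Ioc h₀ b) := by
      rwa [intervalIntegrable_iff_integrableOn_Ioc_of_le hab.le] at hB_int
    refine Integrable.mono' hBint (hg_meas.aestronglyMeasurable.restrict) ?_
    rw [ae_restrict_iff' measurableSet_Ioc]
    filter_upwards with s hs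
    rw [Real.norm_eq_abs, abs_of_nonneg (hg_nonneg s)]
    exact hgB s hs
  -- the primitive F
  have hgint2 : ∀ x₁ ∈ Icc h₀ b, ∀ x₂ ∈ Icc h₀ b, IntervalIntegrable g volume x₁ x₂ := by
    intro x₁ hx₁ x₂ hx₂
    apply hgint.mono_set
    exact uIcc_subset_uIcc (by rw [uIcc_of_le hab.le]; exact hx₁)
      (by rw [uIcc_of_le hab.le]; exact hx₂)
  set F : ℝ → ℝ := fun x => ∫ s in h₀..x, g s with hFdef
  have ha_mem : h₀ ∈ Icc h₀ b := ⟨le_rfl, hab.le⟩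
  have hb_mem : b ∈ Icc h₀ b := ⟨hab.le, le_rfl⟩
  have hF0 : F h₀ = 0 := integral_same
  have hFadd : ∀ x₁ ∈ Icc h₀ b, ∀ x₂ ∈ Icc h₀ b, F x₁ + (∫ s in x₁..x₂, g s) = F x₂ :=
    fun x₁ hx₁ x₂ hx₂ =>
      integral_add_adjacent_intervals (hgint2 h₀ ha_mem x₁ hx₁) (hgint2 x₁ hx₁ x₂ hx₂)
  have hFmono : StrictMonoOn F (Icc h₀ b) := by
    intro x₁ hx₁ x₂ hx₂ hlt
    have hpos : 0 < ∫ s in x₁..x₂, g s := by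
      apply intervalIntegral_pos_of_pos_on (hgint2 x₁ hx₁ x₂ hx₂) _ hlt
      intro x hx
      exact hg_pos x (lt_of_le_of_lt hx₁.1 hx.1) (lt_of_lt_of_le hx.2 hx₂.2)
    have := hFadd x₁ hx₁ x₂ hx₂
    linarith
  have hFcont : ContinuousOn F (Icc h₀ b) := by
    have hIcc : IntegrableOn g (Icc h₀ b) := by
      rw [integrableOn_Icc_iff_integrableOn_Ioc]
      rwa [intervalIntegrable_iff_integrableOn_Ioc_of_le hab.le] at hgint
    have := continuousOn_primitive_interval (a := h₀) (b := b) (μ := volume)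
      (by rwa [uIcc_of_le hab.le])
    rwa [uIcc_of_le hab.le] at this
  have hFderiv : ∀ x ∈ Ioo h₀ b, HasDerivAt F (g x) x := fun x hx =>
    integral_hasDerivAt_right (hgint2 h₀ ha_mem x ⟨hx.1.le, hx.2.le⟩)
      (hg_meas.stronglyMeasurable.stronglyMeasurableAtFilter)
      (hg_contAt x hx.1 hx.2)
  -- integral computations for the kernels
  have Ilow : ∀ x, h₀ ≤ x →
      (∫ s in h₀..x, (Real.sqrt C)⁻¹ * (s - h₀) ^ (-(1/2) : ℝ))
        = (Real.sqrt C)⁻¹ * (2 * Real.sqrt (x - h₀)) := by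
    intro x hx
    rw [intervalIntegral.integral_const_mul]
    congr 1
    have e1 : (∫ s in h₀..x, (s - h₀) ^ (-(1/2) : ℝ))
        = ∫ u in (0:ℝ)..(x - h₀), u ^ (-(1/2) : ℝ) := by
      have := integral_comp_sub_right (a := h₀) (b := x) (fun u => u ^ (-(1/2) : ℝ)) h₀
      simpa using this
    rw [e1, integral_rpow (Or.inl (by norm_num))]
    rw [Real.zero_rpow (by norm_num), Real.sqrt_eq_rpow]
    norm_num
    ring
  have Iupp : ∀ x, x ≤ b →
      (∫ s in x..b, (Real.sqrt C)⁻¹ * (b - s) ^ (-(1/2) : ℝ))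
        = (Real.sqrt C)⁻¹ * (2 * Real.sqrt (b - x)) := by
    intro x hx
    rw [intervalIntegral.integral_const_mul]
    congr 1
    have e1 : (∫ s in x..b, (b - s) ^ (-(1/2) : ℝ))
        = ∫ u in (0:ℝ)..(b - x), u ^ (-(1/2) : ℝ) := by
      have := integral_comp_sub_left (a := x) (b := b) (fun u => u ^ (-(1/2) : ℝ)) b
      simpa using this
    rw [e1, integral_rpow (Or.inl (by norm_num))]
    rw [Real.zero_rpow (by norm_num), Real.sqrt_eq_rpow]
    norm_num
    ring
  -- lower bounds for F near the endpoints
  have hFlow : ∀ x ∈ Icc h₀ b, x < b →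
      (Real.sqrt C)⁻¹ * (2 * Real.sqrt (x - h₀)) ≤ F x := by
    intro x hx hxb
    rw [← Ilow x hx.1]
    exact integral_mono_on hx.1 ((IK1 x).const_mul _) (hgint2 h₀ ha_mem x hx)
      (hg_lb1 x hxb)
  have hFupp : ∀ x ∈ Icc h₀ b, h₀ < x →
      F x + (Real.sqrt C)⁻¹ * (2 * Real.sqrt (b - x)) ≤ F b := by
    intro x hx hx0
    have hmono := integral_mono_on hx.2 ((IK2 x).const_mul _) (hgint2 x hx b hb_mem)
      (hg_lb2 x hx0)
    rw [Iupp x hx.2] at hmono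
    linarith [hFadd x hx b hb_mem]
  -- the inverse function
  set l : ℝ := F b with hldef
  have hl0 : 0 < l := by
    have := hFmono ha_mem hb_mem hab
    rwa [hF0] at this
  have hFmaps : ∀ x ∈ Icc h₀ b, F x ∈ Icc 0 l := by
    intro x hx
    constructor
    · rw [← hF0]; exact hFmono.monotoneOn ha_mem hx hx.1
    · exact hFmono.monotoneOn hx hb_mem hx.2
  have hsurj : ∀ t ∈ Icc 0 l, ∃ x ∈ Icc h₀ b, F x = t := by
    intro t ht
    have hIvt := intermediate_value_Icc hab.le hFcont
    have : t ∈ F '' Icc h₀ b := hIvt (by rw [hF0]; exact ht)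
    rcases this with ⟨x, hx, hFx⟩
    exact ⟨x, hx, hFx⟩
  set h : ℝ → ℝ := Function.invFunOn F (Icc h₀ b) with hhdef
  have hFh : ∀ t ∈ Icc 0 l, F (h t) = t := fun t ht => Function.invFunOn_eq (hsurj t ht)
  have hhmem : ∀ t ∈ Icc 0 l, h t ∈ Icc h₀ b := fun t ht => Function.invFunOn_mem (hsurj t ht)
  have hhF : ∀ x ∈ Icc h₀ b, h (F x) = x := fun x hx => hFmono.injOn.leftInvOn_invFunOn hx
  have hh0 : h 0 = h₀ := by rw [← hF0]; exact hhF h₀ ha_mem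
  have hhl : h l = b := hhF b hb_mem
  have hhmono : StrictMonoOn h (Icc 0 l) := by
    intro t₁ ht₁ t₂ ht₂ hlt
    by_contra hle
    push_neg at hle
    have : t₂ ≤ t₁ := by
      rw [← hFh t₁ ht₁, ← hFh t₂ ht₂]
      exact hFmono.monotoneOn (hhmem t₂ ht₂) (hhmem t₁ ht₁) hle
    linarith
  have hhmaps : MapsTo h (Icc 0 l) (Icc h₀ b) := fun t ht => hhmem t ht
  -- continuity of h
  have himgR : ∀ t ∈ Icc 0 l, Icc (h t) b ⊆ h '' Icc t l := by
    intro t ht x hx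
    have hxm : x ∈ Icc h₀ b := ⟨le_trans (hhmem t ht).1 hx.1, hx.2⟩
    refine ⟨F x, ⟨?_, ?_⟩, hhF x hxm⟩
    · rw [← hFh t ht]; exact hFmono.monotoneOn (hhmem t ht) hxm hx.1
    · exact hFmono.monotoneOn hxm hb_mem hx.2
  have himgL : ∀ t ∈ Icc 0 l, Icc h₀ (h t) ⊆ h '' Icc 0 t := by
    intro t ht x hx
    have hxm : x ∈ Icc h₀ b := ⟨hx.1, le_trans hx.2 (hhmem t ht).2⟩
    refine ⟨F x, ⟨?_, ?_⟩, hhF x hxm⟩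
    · rw [← hF0]; exact hFmono.monotoneOn ha_mem hxm hx.1
    · rw [← hFh t ht]; exact hFmono.monotoneOn hxm (hhmem t ht) hx.2
  have hhcont : ContinuousOn h (Icc 0 l) := by
    intro t ht
    have hsub : Icc 0 l ⊆ Icc 0 t ∪ Icc t l := by
      rw [Icc_union_Icc_eq_Icc ht.1 ht.2]
    have hright : ContinuousWithinAt h (Icc t l) t := by
      rcases eq_or_lt_of_le ht.2 with h' | h'
      · rw [h', Icc_self]; exact continuousWithinAt_singleton
      · have htb : h t < b := by
          rw [← hhl]
          exact hhmono ht ⟨hl0.le, le_rfl⟩ h'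
        have := StrictMonoOn.continuousWithinAt_right_of_image_mem_nhdsWithin
          (hhmono.mono (Icc_subset_Icc ht.1 le_rfl))
          (Icc_mem_nhdsGE_of_mem ⟨le_rfl, h'⟩)
          (mem_of_superset (Icc_mem_nhdsGE_of_mem ⟨le_rfl, htb⟩) (himgR t ht))
        exact this.mono Icc_subset_Ici_self
    have hleft : ContinuousWithinAt h (Icc 0 t) t := by
      rcases eq_or_lt_of_le ht.1 with h' | h'
      · rw [← h', Icc_self]; exact continuousWithinAt_singleton
      · have hta : h₀ < h t := by
          rw [← hh0]
          exact hhmono ⟨le_rfl, hl0.le⟩ ht h'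
        have := StrictMonoOn.continuousWithinAt_left_of_image_mem_nhdsWithin
          (hhmono.mono (Icc_subset_Icc le_rfl ht.2))
          (Icc_mem_nhdsLE_of_mem ⟨h', le_rfl⟩)
          (mem_of_superset (Icc_mem_nhdsLE_of_mem ⟨hta, le_rfl⟩) (himgL t ht))
        exact this.mono Icc_subset_Iic_self
    exact (hleft.union hright).mono hsub
  -- sqrt of y vanishes at the endpoints
  have hsy0 : Real.sqrt (y (h 0)) = 0 := by rw [hh0, hy_a, Real.sqrt_zero]
  have hsyl : Real.sqrt (y (h l)) = 0 := by rw [hhl, hy_b, Real.sqrt_zero]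
  have hsqC : (0:ℝ) < Real.sqrt C := Real.sqrt_pos.2 hC
  -- interior derivative
  have hderiv_int : ∀ t ∈ Ioo 0 l, HasDerivAt h (Real.sqrt (y (h t))) t := by
    intro t ht
    have htmem : t ∈ Icc 0 l := ⟨ht.1.le, ht.2.le⟩
    have hx : h t ∈ Ioo h₀ b := by
      constructor
      · rw [← hh0]; exact hhmono ⟨le_rfl, hl0.le⟩ htmem ht.1
      · rw [← hhl]; exact hhmono htmem ⟨hl0.le, le_rfl⟩ ht.2
    have hcontAt : ContinuousAt h t := hhcont.continuousAt (Icc_mem_nhds ht.1 ht.2)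
    have hF' : HasDerivAt F (g (h t)) (h t) := hFderiv _ hx
    have hg0 : g (h t) ≠ 0 := (hg_pos _ hx.1 hx.2).ne'
    have hev : ∀ᶠ u in 𝓝 t, F (h u) = u := by
      filter_upwards [Icc_mem_nhds ht.1 ht.2] with u hu
      exact hFh u hu
    have hder := HasDerivAt.of_local_left_inverse hcontAt hF' hg0 hev
    have hginv : (g (h t))⁻¹ = Real.sqrt (y (h t)) := by
      simp only [hgdef]
      rw [inv_inv]
    rwa [hginv] at hder
  -- key quadratic bounds near the endpoints
  have hquad0 : ∀ u ∈ Icc 0 l, u < l → 4 * (h u - h₀) ≤ C * u ^ 2 := by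
    intro u hu hul
    have hm := hhmem u hu
    have hub : h u < b := by rw [← hhl]; exact hhmono hu ⟨hl0.le, le_rfl⟩ hul
    have h1 : (Real.sqrt C)⁻¹ * (2 * Real.sqrt (h u - h₀)) ≤ u := by
      have := hFlow (h u) hm hub
      rwa [hFh u hu] at this
    have s1 : 2 * Real.sqrt (h u - h₀) ≤ Real.sqrt C * u := by
      rwa [inv_mul_le_iff₀ hsqC] at h1
    have s2 := mul_self_le_mul_self (by positivity) s1
    have hz : (0:ℝ) ≤ h u - h₀ := by linarith [hm.1]
    have e1 : (2 * Real.sqrt (h u - h₀)) * (2 * Real.sqrt (h u - h₀)) = 4 * (h u - h₀) := by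
      rw [show (2 * Real.sqrt (h u - h₀)) * (2 * Real.sqrt (h u - h₀))
        = 4 * (Real.sqrt (h u - h₀) * Real.sqrt (h u - h₀)) from by ring, Real.mul_self_sqrt hz]
    have e2 : (Real.sqrt C * u) * (Real.sqrt C * u) = C * u ^ 2 := by
      rw [show (Real.sqrt C * u) * (Real.sqrt C * u)
        = (Real.sqrt C * Real.sqrt C) * u ^ 2 from by ring, Real.mul_self_sqrt hC.le]
    rw [e1, e2] at s2
    exact s2
  have hquadl : ∀ u ∈ Icc 0 l, 0 < u → 4 * (b - h u) ≤ C * (l - u) ^ 2 := by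
    intro u hu hu0
    have hm := hhmem u hu
    have hua : h₀ < h u := by rw [← hh0]; exact hhmono ⟨le_rfl, hl0.le⟩ hu hu0
    have h1 : F (h u) + (Real.sqrt C)⁻¹ * (2 * Real.sqrt (b - h u)) ≤ F b :=
      hFupp (h u) hm hua
    rw [hFh u hu] at h1
    have s1 : 2 * Real.sqrt (b - h u) ≤ Real.sqrt C * (l - u) := by
      rw [← inv_mul_le_iff₀ hsqC]
      rw [hldef] at *
      linarith
    have s2 := mul_self_le_mul_self (by positivity) s1
    have hz : (0:ℝ) ≤ b - h u := by linarith [hm.2]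
    have e1 : (2 * Real.sqrt (b - h u)) * (2 * Real.sqrt (b - h u)) = 4 * (b - h u) := by
      rw [show (2 * Real.sqrt (b - h u)) * (2 * Real.sqrt (b - h u))
        = 4 * (Real.sqrt (b - h u) * Real.sqrt (b - h u)) from by ring, Real.mul_self_sqrt hz]
    have e2 : (Real.sqrt C * (l - u)) * (Real.sqrt C * (l - u)) = C * (l - u) ^ 2 := by
      rw [show (Real.sqrt C * (l - u)) * (Real.sqrt C * (l - u))
        = (Real.sqrt C * Real.sqrt C) * (l - u) ^ 2 from by ring, Real.mul_self_sqrt hC.le]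
    rw [e1, e2] at s2
    exact s2
  -- derivative at the left endpoint
  have hderiv0 : HasDerivWithinAt h 0 (Icc 0 l) 0 := by
    rw [hasDerivWithinAt_iff_tendsto_slope]
    have gtend : Tendsto (fun u : ℝ => C / 4 * u) (𝓝[Icc 0 l \ {0}] 0) (𝓝 0) := by
      have : Tendsto (fun u : ℝ => C / 4 * u) (𝓝 0) (𝓝 (C / 4 * 0)) :=
        (continuous_const.mul continuous_id).tendsto 0
      simpa using this.mono_left nhdsWithin_le_nhds
    apply tendsto_of_tendsto_of_tendsto_of_le_of_le' tendsto_const_nhds gtend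
    · filter_upwards [self_mem_nhdsWithin] with u hu
      have hu0 : 0 < u := lt_of_le_of_ne hu.1.1 (Ne.symm hu.2)
      rw [slope_def_field, hh0]
      apply div_nonneg _ (by linarith)
      linarith [(hhmem u hu.1).1]
    · filter_upwards [self_mem_nhdsWithin, nhdsWithin_le_nhds (Iio_mem_nhds hl0)]
        with u hu hul
      have hu0 : 0 < u := lt_of_le_of_ne hu.1.1 (Ne.symm hu.2)
      rw [slope_def_field, hh0]
      rw [div_le_iff₀ (by linarith)]
      have hq := hquad0 u hu.1 hul
      have e : C * u ^ 2 = 4 * (C / 4 * u * u) := by ring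
      linarith
  -- derivative at the right endpoint
  have hderivl : HasDerivWithinAt h 0 (Icc 0 l) l := by
    rw [hasDerivWithinAt_iff_tendsto_slope]
    have gtend : Tendsto (fun u : ℝ => C / 4 * (l - u)) (𝓝[Icc 0 l \ {l}] l) (𝓝 0) := by
      have : Tendsto (fun u : ℝ => C / 4 * (l - u)) (𝓝 l) (𝓝 (C / 4 * (l - l))) :=
        (continuous_const.mul (continuous_const.sub continuous_id)).tendsto l
      simpa using this.mono_left nhdsWithin_le_nhds
    apply tendsto_of_tendsto_of_tendsto_of_le_of_le' tendsto_const_nhds gtend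
    · filter_upwards [self_mem_nhdsWithin] with u hu
      have hul : u < l := lt_of_le_of_ne hu.1.2 hu.2
      rw [slope_def_field, hhl]
      have e : (h u - b) / (u - l) = (b - h u) / (l - u) := by
        rw [← neg_sub b (h u), ← neg_sub l u, neg_div_neg_eq]
      rw [e]
      apply div_nonneg _ (by linarith)
      linarith [(hhmem u hu.1).2]
    · filter_upwards [self_mem_nhdsWithin, nhdsWithin_le_nhds (Ioi_mem_nhds hl0)]
        with u hu hu0
      have hul : u < l := lt_of_le_of_ne hu.1.2 hu.2
      rw [slope_def_field, hhl]
      have e : (h u - b) / (u - l) = (b - h u) / (l - u) := by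
        rw [← neg_sub b (h u), ← neg_sub l u, neg_div_neg_eq]
      rw [e, div_le_iff₀ (by linarith)]
      have hq := hquadl u hu.1 hu0
      have e : C * (l - u) ^ 2 = 4 * (C / 4 * (l - u) * (l - u)) := by ring
      linarith
  -- assemble
  refine ⟨l, hl0, h, hhcont, hhmono, hhmaps, hh0, hhl, ?_⟩
  intro t ht
  rcases eq_or_lt_of_le ht.1 with h0' | h0'
  · rw [← h0', hsy0]
    exact hderiv0
  rcases eq_or_lt_of_le ht.2 with hl' | hl'
  · rw [hl', hsyl]
    exact hderivl
  · exact (hderiv_int t ⟨h0', hl'⟩).hasDerivWithinAt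

end
end

section
/- Let h₀ > 0, h_l = 3^{1/4} h₀, y(h) = 1 − h⁴/(4h₀⁴) − 3h₀⁴/(4h⁴), and let h : [0, l] → [h₀, h_l] be strictly increasing and differentiable with h(0) = h₀, h(l) = h_l and h′(t) = √(y(h(t))) for all t ∈ [0, l]. Then h′ is differentiable on [0, l] (one-sidedly at the endpoints) with h″(t) = y′(h(t))/2 for every t ∈ [0, l]; in particular the boundary conditions h″(0) = 1/h(0) and h″(l) = −1/h(l) hold. -/
open Set Filter Topology

/-- For a profile function `h : [0, l] → [h₀, h_l]` solving
`h′ = √(y(h))` with `y(h) = 1 − h⁴/(4h₀⁴) − 3h₀⁴/(4h⁴)` and `h_l = 3^{1/4}h₀`,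
the derivative `h′ = √(y(h))` is itself differentiable on `[0, l]`
(one-sidedly at the endpoints) with `h″(t) = y′(h(t))/2`; in particular the
smooth-closing boundary conditions `h″(0) = 1/h(0)` and `h″(l) = −1/h(l)` hold. -/
theorem profile_second_derivative (h₀ hl : ℝ) (hh₀ : 0 < h₀)
    (hhl : hl = 3 ^ ((1 : ℝ) / 4) * h₀)
    (y : ℝ → ℝ)
    (hy : y = fun h => 1 - h ^ 4 / (4 * h₀ ^ 4) - 3 * h₀ ^ 4 / (4 * h ^ 4))
    (l : ℝ) (hl0 : 0 < l) (h : ℝ → ℝ)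
    (hmono : StrictMonoOn h (Set.Icc 0 l))
    (hmap : Set.MapsTo h (Set.Icc 0 l) (Set.Icc h₀ hl))
    (h0 : h 0 = h₀) (hle : h l = hl)
    (hderiv : ∀ t ∈ Set.Icc 0 l,
      HasDerivWithinAt h (Real.sqrt (y (h t))) (Set.Icc 0 l) t) :
    (∀ t ∈ Set.Icc 0 l,
      HasDerivWithinAt (fun s => Real.sqrt (y (h s)))
        (deriv y (h t) / 2) (Set.Icc 0 l) t) ∧
    deriv y (h 0) / 2 = 1 / h 0 ∧
    deriv y (h l) / 2 = -(1 / h l) := by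
  have hh₀4 : (0:ℝ) < h₀ ^ 4 := by positivity
  have hl4 : hl ^ 4 = 3 * h₀ ^ 4 := by
    rw [hhl, mul_pow]
    have h34 : ((3:ℝ) ^ ((1:ℝ)/4)) ^ (4:ℕ) = 3 := by
      rw [← Real.rpow_natCast ((3:ℝ) ^ ((1:ℝ)/4)) 4,
        ← Real.rpow_mul (by norm_num : (0:ℝ) ≤ 3)]
      norm_num
    rw [h34]
  have hhlpos : 0 < hl := by
    rw [hhl]
    have : (0:ℝ) < (3:ℝ) ^ ((1:ℝ)/4) := Real.rpow_pos_of_pos (by norm_num) _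
    positivity
  -- derivative of y at any nonzero point
  have A : ∀ x : ℝ, x ≠ 0 → HasDerivAt y (-x^3/h₀^4 + 3*h₀^4/x^5) x := by
    intro x hx
    subst hy
    have h1 : HasDerivAt (fun x:ℝ => x^4) (4*x^3) x := by
      simpa using hasDerivAt_pow 4 x
    have h2 : HasDerivAt (fun x:ℝ => 1 - x^4/(4*h₀^4)) (0 - 4*x^3/(4*h₀^4)) x :=
      (hasDerivAt_const x (1:ℝ)).sub (h1.div_const (4*h₀^4))
    have h3 : HasDerivAt (fun x:ℝ => 3*h₀^4/(4*x^4))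
        ((0 * (4*x^4) - (3*h₀^4) * (4*(4*x^3))) / (4*x^4)^2) x :=
      (hasDerivAt_const x (3*h₀^4)).div (h1.const_mul 4)
        (by positivity)
    have := h2.sub h3
    refine this.congr_deriv ?_
    have hx4 : x^4 ≠ 0 := pow_ne_zero 4 hx
    field_simp
    ring
  have hcont : ContinuousOn h (Set.Icc 0 l) :=
    fun t ht => (hderiv t ht).continuousWithinAt
  have h0I : (0:ℝ) ∈ Set.Icc 0 l := ⟨le_rfl, hl0.le⟩
  have hlI : l ∈ Set.Icc 0 l := ⟨hl0.le, le_rfl⟩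
  -- interior key lemma
  have key : ∀ t ∈ Set.Ioo 0 l, HasDerivAt (fun s => Real.sqrt (y (h s)))
      ((-(h t)^3/h₀^4 + 3*h₀^4/(h t)^5) / 2) t := by
    intro t ht
    have htI : t ∈ Set.Icc 0 l := Set.Ioo_subset_Icc_self ht
    have hx : h₀ < h t := h0 ▸ hmono h0I htI ht.1
    have hx2 : h t < hl := hle ▸ hmono htI hlI ht.2
    have hxpos : 0 < h t := hh₀.trans hx
    have hy4 : h₀^4 < (h t)^4 := by
      apply pow_lt_pow_left₀ hx hh₀.le
      norm_num
    have hy4' : (h t)^4 < 3*h₀^4 := by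
      rw [← hl4]
      apply pow_lt_pow_left₀ hx2 hxpos.le
      norm_num
    have hypos : 0 < y (h t) := by
      have hrw : y (h t) = ((h t)^4 - h₀^4) * (3*h₀^4 - (h t)^4) / (4*h₀^4*(h t)^4) := by
        rw [hy]
        have : (h t)^4 ≠ 0 := by positivity
        field_simp
        ring
      rw [hrw]
      exact div_pos (mul_pos (by linarith) (by linarith)) (by positivity)
    have hD := A (h t) hxpos.ne'
    have hg : HasDerivAt (fun s => y (h s))
        ((-(h t)^3/h₀^4 + 3*h₀^4/(h t)^5) * Real.sqrt (y (h t))) t :=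
      hD.comp t ((hderiv t htI).hasDerivAt (Icc_mem_nhds ht.1 ht.2))
    have hs := hg.sqrt (ne_of_gt hypos)
    convert hs using 1
    have hsq : Real.sqrt (y (h t)) ≠ 0 := (Real.sqrt_pos.mpr hypos).ne'
    field_simp
  have fdiff : DifferentiableOn ℝ (fun s => Real.sqrt (y (h s))) (Set.Ioo 0 l) :=
    fun t ht => ((key t ht).differentiableAt).differentiableWithinAt
  have derivf : ∀ t ∈ Set.Ioo 0 l, deriv (fun s => Real.sqrt (y (h s))) t
      = (-(h t)^3/h₀^4 + 3*h₀^4/(h t)^5) / 2 :=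
    fun t ht => (key t ht).deriv
  -- continuity of D = fun x => (-x^3/h₀^4 + 3h₀^4/x^5)/2 at nonzero points
  have Dcont : ∀ x : ℝ, x ≠ 0 →
      ContinuousAt (fun x : ℝ => (-x^3/h₀^4 + 3*h₀^4/x^5) / 2) x := by
    intro x hx
    have : ContinuousAt (fun x : ℝ => -x^3/h₀^4 + 3*h₀^4/x^5) x := by
      apply ContinuousAt.add
      · exact ((continuous_pow 3).continuousAt (x := x)).neg.div_const _
      · exact continuousAt_const.div ((continuous_pow 5).continuousAt (x := x)) (pow_ne_zero 5 hx)
    exact this.div_const 2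
  -- endpoint at 0
  have e0 : HasDerivWithinAt (fun s => Real.sqrt (y (h s)))
      ((-h₀^3/h₀^4 + 3*h₀^4/h₀^5) / 2) (Set.Icc 0 l) 0 := by
    have hIoo : Set.Ioo 0 l ∈ 𝓝[>] (0:ℝ) := Ioo_mem_nhdsGT_of_mem ⟨le_rfl, hl0⟩
    have hle' : 𝓝[>] (0:ℝ) ≤ 𝓝[Set.Ioo 0 l] 0 := nhdsWithin_le_of_mem hIoo
    have hcont0 : ContinuousWithinAt h (Set.Ioo 0 l) 0 :=
      (hcont 0 h0I).mono Set.Ioo_subset_Icc_self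
    have ycont : ContinuousAt y (h 0) := by
      rw [h0]; exact (A h₀ hh₀.ne').differentiableAt.continuousAt
    have fcont0 : ContinuousWithinAt (fun s => Real.sqrt (y (h s))) (Set.Ioo 0 l) 0 :=
      Real.continuous_sqrt.continuousAt.comp_continuousWithinAt
        (ycont.comp_continuousWithinAt hcont0)
    have tend1 : Tendsto (fun x => (-(h x)^3/h₀^4 + 3*h₀^4/(h x)^5) / 2)
        (𝓝[Set.Ioo 0 l] 0) (𝓝 ((-h₀^3/h₀^4 + 3*h₀^4/h₀^5) / 2)) := by
      have hhh : Tendsto h (𝓝[Set.Ioo 0 l] 0) (𝓝 h₀) := by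
        have := hcont0
        rw [ContinuousWithinAt, h0] at this
        exact this
      exact ((Dcont h₀ hh₀.ne').tendsto).comp hhh
    have tend2 : Tendsto (fun x => deriv (fun s => Real.sqrt (y (h s))) x)
        (𝓝[>] (0:ℝ)) (𝓝 ((-h₀^3/h₀^4 + 3*h₀^4/h₀^5) / 2)) := by
      apply Tendsto.congr' _ (tend1.mono_left hle')
      filter_upwards [hIoo] with x hx
      exact (derivf x hx).symm
    exact (hasDerivWithinAt_Ici_of_tendsto_deriv fdiff fcont0 hIoo tend2).mono
      Set.Icc_subset_Ici_self
  -- endpoint at l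
  have el : HasDerivWithinAt (fun s => Real.sqrt (y (h s)))
      ((-hl^3/h₀^4 + 3*h₀^4/hl^5) / 2) (Set.Icc 0 l) l := by
    have hIoo : Set.Ioo 0 l ∈ 𝓝[<] l := Ioo_mem_nhdsLT_of_mem ⟨hl0, le_rfl⟩
    have hle' : 𝓝[<] l ≤ 𝓝[Set.Ioo 0 l] l := nhdsWithin_le_of_mem hIoo
    have hcontl : ContinuousWithinAt h (Set.Ioo 0 l) l :=
      (hcont l hlI).mono Set.Ioo_subset_Icc_self
    have ycont : ContinuousAt y (h l) := by
      rw [hle]; exact (A hl hhlpos.ne').differentiableAt.continuousAt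
    have fcontl : ContinuousWithinAt (fun s => Real.sqrt (y (h s))) (Set.Ioo 0 l) l :=
      Real.continuous_sqrt.continuousAt.comp_continuousWithinAt
        (ycont.comp_continuousWithinAt hcontl)
    have tend1 : Tendsto (fun x => (-(h x)^3/h₀^4 + 3*h₀^4/(h x)^5) / 2)
        (𝓝[Set.Ioo 0 l] l) (𝓝 ((-hl^3/h₀^4 + 3*h₀^4/hl^5) / 2)) := by
      have hhh : Tendsto h (𝓝[Set.Ioo 0 l] l) (𝓝 hl) := by
        have := hcontl
        rw [ContinuousWithinAt, hle] at this
        exact this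
      exact ((Dcont hl hhlpos.ne').tendsto).comp hhh
    have tend2 : Tendsto (fun x => deriv (fun s => Real.sqrt (y (h s))) x)
        (𝓝[<] l) (𝓝 ((-hl^3/h₀^4 + 3*h₀^4/hl^5) / 2)) := by
      apply Tendsto.congr' _ (tend1.mono_left hle')
      filter_upwards [hIoo] with x hx
      exact (derivf x hx).symm
    exact (hasDerivWithinAt_Iic_of_tendsto_deriv fdiff fcontl hIoo tend2).mono
      Set.Icc_subset_Iic_self
  have d0 : deriv y (h 0) = -h₀^3/h₀^4 + 3*h₀^4/h₀^5 := by
    rw [h0]; exact (A h₀ hh₀.ne').deriv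
  have dl : deriv y (h l) = -hl^3/h₀^4 + 3*h₀^4/hl^5 := by
    rw [hle]; exact (A hl hhlpos.ne').deriv
  refine ⟨?_, ?_, ?_⟩
  · intro t ht
    rcases eq_or_lt_of_le ht.1 with rfl | h0t
    · rw [d0]; exact e0
    rcases eq_or_lt_of_le ht.2 with rfl | htl
    · rw [dl]; exact el
    · have hx : h₀ < h t := h0 ▸ hmono h0I ht h0t
      have hxpos : 0 < h t := hh₀.trans hx
      rw [show deriv y (h t) = -(h t)^3/h₀^4 + 3*h₀^4/(h t)^5 from (A (h t) hxpos.ne').deriv]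
      exact (key t ⟨h0t, htl⟩).hasDerivWithinAt
  · rw [d0, h0]
    field_simp
    ring
  · rw [dl, hle]
    have hhl5 : hl^5 ≠ 0 := by positivity
    field_simp
    linear_combination (-(hl^4+h₀^4)) * hl4
end
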